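/- (The rough punctured code is a valid stabilizer code.) The rough punctured stabilizer matrices commute: (H_X + H_X'') · (H_Z + H_Z'')ᵗ = 0 over F₂. -/

import Mathlib

open Matrix Kronecker

variable {V C : Type*} [Fintype V] [Fintype C] [DecidableEq V] [DecidableEq C]

/-- X-stabilizer matrix `H_X = (1_V ⊗ H | Hᵗ ⊗ 1_C)` of the hypergraph product of `H`
with itself. Rows are indexed by `V × C`, column blocks by `V × V` and `C × C`. -/
def HX (H : Matrix C V (ZMod 2)) : Matrix (V × C) ((V × V) ⊕ (C × C)) (ZMod 2) :=
  Matrix.fromCols ((1 : Matrix V V (ZMod 2)) ⊗ₖ H) (Hᵀ ⊗ₖ (1 : Matrix C C (ZMod 2)))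

/-- Z-stabilizer matrix `H_Z = (H ⊗ 1_V | 1_C ⊗ Hᵗ)`. Rows are indexed by `C × V`. -/
def HZ (H : Matrix C V (ZMod 2)) : Matrix (C × V) ((V × V) ⊕ (C × C)) (ZMod 2) :=
  Matrix.fromCols (H ⊗ₖ (1 : Matrix V V (ZMod 2))) ((1 : Matrix C C (ZMod 2)) ⊗ₖ Hᵀ)

/-- Diagonal 0–1 projector matrix `1_P` onto a subset `P`. -/
def projM {α : Type*} [Fintype α] [DecidableEq α] (P : Finset α) : Matrix α α (ZMod 2) :=
  Matrix.diagonal fun a => if a ∈ P then 1 else 0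

/-- Neighborhood `N = {c ∈ C : ∃ v ∈ S, H c v = 1}` of a set `S` of variable nodes. -/
def Nbhd (H : Matrix C V (ZMod 2)) (S : Finset V) : Finset C :=
  @Finset.filter _ (fun c => ∃ v ∈ S, H c v = 1) (fun _ => inferInstance) Finset.univ

/-- Ancestor `A = {c ∈ C : ∀ v, H c v = 1 → v ∈ S}` of a set `S` of variable nodes. -/
def Anc (H : Matrix C V (ZMod 2)) (S : Finset V) : Finset C :=
  @Finset.filter _ (fun c => ∀ v, H c v = 1 → v ∈ S) (fun _ => inferInstance) Finset.univ

/-- Neighborhood `M = {v ∈ V : ∃ c ∈ T, H c v = 1}` of a set `T` of check nodes. -/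
def NbhdT (H : Matrix C V (ZMod 2)) (T : Finset C) : Finset V :=
  Finset.univ.filter fun v => ∃ c ∈ T, H c v = 1

/-- Ancestor `B = {v ∈ V : ∀ c, H c v = 1 → c ∈ T}` of a set `T` of check nodes. -/
def AncT (H : Matrix C V (ZMod 2)) (T : Finset C) : Finset V :=
  Finset.univ.filter fun v => ∀ c, H c v = 1 → c ∈ T

/-- Smooth-puncture X matrix `H_X' = (1_B ⊗ H_S | H_Tᵗ ⊗ 1_A)`,
where `H_S = H·1_S` and `H_T = 1_T·H`. -/
def HX' (H : Matrix C V (ZMod 2)) (S : Finset V) (T : Finset C) :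
    Matrix (V × C) ((V × V) ⊕ (C × C)) (ZMod 2) :=
  Matrix.fromCols (projM (AncT H T) ⊗ₖ (H * projM S)) ((projM T * H)ᵀ ⊗ₖ projM (Anc H S))

/-- Smooth-puncture Z matrix `H_Z' = (H_T ⊗ 1_S | 1_T ⊗ H_Sᵗ)`. -/
def HZ' (H : Matrix C V (ZMod 2)) (S : Finset V) (T : Finset C) :
    Matrix (C × V) ((V × V) ⊕ (C × C)) (ZMod 2) :=
  Matrix.fromCols ((projM T * H) ⊗ₖ projM S) (projM T ⊗ₖ (H * projM S)ᵀ)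

/-- Rough-puncture X matrix `H_X'' = (1_S ⊗ H_T | H_Sᵗ ⊗ 1_T)`. -/
def HXrough (H : Matrix C V (ZMod 2)) (S : Finset V) (T : Finset C) :
    Matrix (V × C) ((V × V) ⊕ (C × C)) (ZMod 2) :=
  Matrix.fromCols (projM S ⊗ₖ (projM T * H)) ((H * projM S)ᵀ ⊗ₖ projM T)

/-- Rough-puncture Z matrix `H_Z'' = (H_S ⊗ 1_B | 1_A ⊗ H_Tᵗ)`. -/
def HZrough (H : Matrix C V (ZMod 2)) (S : Finset V) (T : Finset C) :
    Matrix (C × V) ((V × V) ⊕ (C × C)) (ZMod 2) :=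
  Matrix.fromCols ((H * projM S) ⊗ₖ projM (AncT H T)) (projM (Anc H S) ⊗ₖ (projM T * H)ᵀ)


section Aux
open Matrix

lemma zmod2_ne_zero {x : ZMod 2} (h : ¬ x = 0) : x = 1 := by revert h; revert x; decide

lemma projM_mul_self {α : Type*} [Fintype α] [DecidableEq α] (P : Finset α) :
    projM P * projM P = projM P := by
  unfold projM
  rw [Matrix.diagonal_mul_diagonal]
  ext a b
  by_cases h : a ∈ P <;> simp [Matrix.diagonal, h]

lemma projM_transpose {α : Type*} [Fintype α] [DecidableEq α] (P : Finset α) :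
    (projM P)ᵀ = projM P := Matrix.diagonal_transpose _

lemma proj_mul_ancT (H : Matrix C V (ZMod 2)) (T : Finset C) :
    projM T * (H * projM (AncT H T)) = H * projM (AncT H T) := by
  ext c v
  unfold projM
  rw [Matrix.diagonal_mul, Matrix.mul_diagonal]
  by_cases hv : v ∈ AncT H T
  · by_cases hc : c ∈ T
    · simp [hc]
    · by_cases h0 : H c v = 0
      · simp [h0]
      · exact absurd ((Finset.mem_filter.mp hv).2 c (zmod2_ne_zero h0)) hc
  · simp [hv]

lemma proj_mul_anc (H : Matrix C V (ZMod 2)) (S : Finset V) :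
    projM S * (Hᵀ * projM (Anc H S)) = Hᵀ * projM (Anc H S) := by
  ext v c
  unfold projM
  rw [Matrix.diagonal_mul, Matrix.mul_diagonal]
  by_cases hc : c ∈ Anc H S
  · by_cases hv : v ∈ S
    · simp [hv]
    · by_cases h0 : H c v = 0
      · simp [h0, show Hᵀ v c = 0 from h0]
      · exact absurd ((by simp only [Anc, Finset.mem_filter] at hc; exact hc.2 : ∀ w, H c w = 1 → w ∈ S) v (zmod2_ne_zero h0)) hv
  · simp [hc]

lemma proj_proj_mul {α n : Type*} [Fintype α] [DecidableEq α]
    (P : Finset α) (X : Matrix α n (ZMod 2)) :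
    projM P * (projM P * X) = projM P * X := by
  rw [← Matrix.mul_assoc, projM_mul_self]

lemma fromColumns_add {m n₁ n₂ R : Type*} [Add R] (A₁ C₁ : Matrix m n₁ R)
    (A₂ C₂ : Matrix m n₂ R) :
    Matrix.fromCols A₁ A₂ + Matrix.fromCols C₁ C₂
      = Matrix.fromCols (A₁ + C₁) (A₂ + C₂) := by
  ext i j
  cases j <;> simp [Matrix.fromCols]

lemma matrix_add_self {m n : Type*} (A : Matrix m n (ZMod 2)) : A + A = 0 := by
  ext i j
  exact CharTwo.add_self_eq_zero _

lemma matrix_two_nsmul {m n : Type*} (A : Matrix m n (ZMod 2)) : (2 : ℕ) • A = 0 := by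
  rw [two_smul]; exact matrix_add_self A

lemma matrix_two_zsmul {m n : Type*} (A : Matrix m n (ZMod 2)) : (2 : ℤ) • A = 0 := by
  rw [two_smul]; exact matrix_add_self A

end Aux

/-- The rough punctured code is a valid stabilizer code:
`(H_X + H_X'') · (H_Z + H_Z'')ᵗ = 0` over `F₂`. -/
theorem stmt_8 (H : Matrix C V (ZMod 2)) (S : Finset V) (T : Finset C) :
    (HX H + HXrough H S T) * (HZ H + HZrough H S T)ᵀ = 0 := by
  classical
  have hPS := projM_mul_self S
  have hPT := projM_mul_self T
  have hB := proj_mul_ancT H T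
  have hA := proj_mul_anc H S
  unfold HX HXrough HZ HZrough
  rw [fromColumns_add, fromColumns_add, Matrix.transpose_fromCols,
    Matrix.fromCols_mul_fromRows]
  simp only [Matrix.transpose_add, ← Matrix.kroneckerMap_transpose,
    Matrix.transpose_one, Matrix.transpose_transpose, Matrix.transpose_mul,
    projM_transpose, Matrix.add_mul, Matrix.mul_add, ← Matrix.mul_kronecker_mul,
    Matrix.one_mul, Matrix.mul_one]
  simp only [Matrix.mul_assoc]
  simp only [proj_proj_mul, hA, hB]
  abel_nf
  simp only [matrix_two_nsmul, matrix_two_zsmul, add_zero, zero_add]
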